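/- Let p be a prime and b(x) ∈ 𝔽_p(x). Define b_0 = b and b_{k+1} = b_k' + b·b_k. Then b_p(x) = b^{(p−1)}(x) + b(x)^p, where b^{(p−1)} is the (p−1)-st formal derivative of b. -/

import Mathlib

open Polynomial

/-- Formal derivative of a rational function, via the quotient rule on the
canonical numerator/denominator representation. -/
noncomputable def rderiv {F : Type*} [Field F] (f : RatFunc F) : RatFunc F :=
  algebraMap (Polynomial F) (RatFunc F)
      (Polynomial.derivative f.num * f.denom - f.num * Polynomial.derivative f.denom) /
    algebraMap (Polynomial F) (RatFunc F) (f.denom ^ 2)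

/-- The sequence defined by `b₀ = b` and `b_{k+1} = b_k' + b·b_k`; `bseq b (k-1)` is the
constant term of the expansion of `(∂ + b)^k` in `F(x)⟨∂⟩`. -/
noncomputable def bseq {F : Type*} [Field F] (b : RatFunc F) : ℕ → RatFunc F
  | 0 => b
  | k + 1 => rderiv (bseq b k) + b * bseq b k

section RderivLemmas

variable {F : Type*} [Field F]

theorem rderiv_div (a c : Polynomial F) (hc : c ≠ 0) :
    rderiv (algebraMap (Polynomial F) (RatFunc F) a / algebraMap (Polynomial F) (RatFunc F) c) =
      algebraMap (Polynomial F) (RatFunc F) (derivative a * c - a * derivative c) /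
        algebraMap (Polynomial F) (RatFunc F) (c ^ 2) := by
  set f := algebraMap (Polynomial F) (RatFunc F) a / algebraMap (Polynomial F) (RatFunc F) c
    with hf
  have hden : f.denom ≠ 0 := RatFunc.denom_ne_zero f
  have h1 : algebraMap (Polynomial F) (RatFunc F) f.num *
      algebraMap (Polynomial F) (RatFunc F) c =
      algebraMap (Polynomial F) (RatFunc F) a * algebraMap (Polynomial F) (RatFunc F) f.denom := by
    rw [← div_eq_div_iff (RatFunc.algebraMap_ne_zero hden) (RatFunc.algebraMap_ne_zero hc)]
    rw [RatFunc.num_div_denom]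
  have key : f.num * c = a * f.denom := by
    apply RatFunc.algebraMap_injective F
    rw [map_mul, map_mul]; exact h1
  have key' : derivative f.num * c + f.num * derivative c =
      derivative a * f.denom + a * derivative f.denom := by
    have := congrArg derivative key
    simpa [derivative_mul] using this
  show algebraMap (Polynomial F) (RatFunc F) _ / algebraMap (Polynomial F) (RatFunc F) _ = _
  rw [div_eq_div_iff (RatFunc.algebraMap_ne_zero (pow_ne_zero 2 hden))
      (RatFunc.algebraMap_ne_zero (pow_ne_zero 2 hc)), ← map_mul, ← map_mul]
  congr 1
  apply mul_left_cancel₀ hc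
  linear_combination (f.denom * c ^ 2) * key' - (derivative f.denom * c ^ 2 +
      derivative c * c * f.denom) * key

theorem rderiv_algebraMap (q : Polynomial F) :
    rderiv (algebraMap (Polynomial F) (RatFunc F) q) = algebraMap (Polynomial F) (RatFunc F)
      (derivative q) := by
  have := rderiv_div q 1 one_ne_zero
  simpa using this

theorem rderiv_one : rderiv (1 : RatFunc F) = 0 := by
  have := rderiv_algebraMap (1 : Polynomial F)
  simpa using this

theorem rderiv_add (f g : RatFunc F) : rderiv (f + g) = rderiv f + rderiv g := by
  have key : ∀ a c e d : Polynomial F, c ≠ 0 → d ≠ 0 →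
      rderiv (algebraMap (Polynomial F) (RatFunc F) a / algebraMap (Polynomial F) (RatFunc F) c +
        algebraMap (Polynomial F) (RatFunc F) e / algebraMap (Polynomial F) (RatFunc F) d) =
      rderiv (algebraMap (Polynomial F) (RatFunc F) a / algebraMap (Polynomial F) (RatFunc F) c) +
      rderiv (algebraMap (Polynomial F) (RatFunc F) e / algebraMap (Polynomial F) (RatFunc F) d)
      := by
    intro a c e d hc hd
    have hc' : algebraMap (Polynomial F) (RatFunc F) c ≠ 0 := RatFunc.algebraMap_ne_zero hc
    have hd' : algebraMap (Polynomial F) (RatFunc F) d ≠ 0 := RatFunc.algebraMap_ne_zero hd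
    rw [div_add_div _ _ hc' hd', ← map_mul, ← map_mul, ← map_mul, ← map_add,
      rderiv_div _ _ (mul_ne_zero hc hd), rderiv_div a c hc, rderiv_div e d hd]
    simp only [derivative_mul, derivative_add]
    simp only [map_mul, map_sub, map_add, map_pow]
    field_simp
    ring
  rw [← RatFunc.num_div_denom f, ← RatFunc.num_div_denom g]
  exact key _ _ _ _ (RatFunc.denom_ne_zero f) (RatFunc.denom_ne_zero g)

theorem rderiv_mul (f g : RatFunc F) : rderiv (f * g) = rderiv f * g + f * rderiv g := by
  have key : ∀ a c e d : Polynomial F, c ≠ 0 → d ≠ 0 →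
      rderiv (algebraMap (Polynomial F) (RatFunc F) a / algebraMap (Polynomial F) (RatFunc F) c *
        (algebraMap (Polynomial F) (RatFunc F) e / algebraMap (Polynomial F) (RatFunc F) d)) =
      rderiv (algebraMap (Polynomial F) (RatFunc F) a / algebraMap (Polynomial F) (RatFunc F) c) *
        (algebraMap (Polynomial F) (RatFunc F) e / algebraMap (Polynomial F) (RatFunc F) d) +
      algebraMap (Polynomial F) (RatFunc F) a / algebraMap (Polynomial F) (RatFunc F) c *
      rderiv (algebraMap (Polynomial F) (RatFunc F) e / algebraMap (Polynomial F) (RatFunc F) d)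
      := by
    intro a c e d hc hd
    have hc' : algebraMap (Polynomial F) (RatFunc F) c ≠ 0 := RatFunc.algebraMap_ne_zero hc
    have hd' : algebraMap (Polynomial F) (RatFunc F) d ≠ 0 := RatFunc.algebraMap_ne_zero hd
    rw [div_mul_div_comm, ← map_mul, ← map_mul,
      rderiv_div _ _ (mul_ne_zero hc hd), rderiv_div a c hc, rderiv_div e d hd]
    simp only [derivative_mul]
    simp only [map_mul, map_sub, map_add, map_pow]
    field_simp
    ring
  rw [← RatFunc.num_div_denom f, ← RatFunc.num_div_denom g]
  exact key _ _ _ _ (RatFunc.denom_ne_zero f) (RatFunc.denom_ne_zero g)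

theorem rderiv_smul (c : F) (f : RatFunc F) : rderiv (c • f) = c • rderiv f := by
  have h1 : (c • f) = algebraMap (Polynomial F) (RatFunc F) (Polynomial.C c) * f := by
    rw [Algebra.smul_def, IsScalarTower.algebraMap_apply F (Polynomial F) (RatFunc F)]
    rfl
  rw [h1, rderiv_mul, rderiv_algebraMap]
  simp [Algebra.smul_def, IsScalarTower.algebraMap_apply F (Polynomial F) (RatFunc F)]

/-- `rderiv` as a linear endomorphism. -/
noncomputable def DD (F : Type*) [Field F] : Module.End F (RatFunc F) :=
  { toFun := rderiv
    map_add' := rderiv_add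
    map_smul' := rderiv_smul }

/-- Multiplication operator as a linear endomorphism. -/
noncomputable def MM {F : Type*} [Field F] (f : RatFunc F) : Module.End F (RatFunc F) :=
  Algebra.lmul F (RatFunc F) f

@[simp] theorem DD_apply (f : RatFunc F) : DD F f = rderiv f := rfl
@[simp] theorem MM_apply (f g : RatFunc F) : MM f g = f * g := rfl

theorem MM_pow (f : RatFunc F) (n : ℕ) : (MM f) ^ n = MM (f ^ n) := by
  unfold MM; rw [← map_pow]

theorem MM_mul_MM (f g : RatFunc F) : MM f * MM g = MM (f * g) := by
  unfold MM; rw [← map_mul]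

theorem comm_DM (f : RatFunc F) : DD F * MM f - MM f * DD F = MM (rderiv f) := by
  ext g
  show rderiv (f * g) - f * rderiv g = rderiv f * g
  rw [rderiv_mul]; ring

end RderivLemmas

section
variable (p : ℕ) [Fact p.Prime]

theorem hZ1 (k : ℕ) (hk : k ≤ p - 1) : (((p-1).choose k : ZMod p)) = (-1)^k := by
  have hp : p.Prime := Fact.out
  induction k with
  | zero => simp
  | succ k ih =>
    have hk1 : k + 1 ≤ p - 1 := hk
    have hk' : k ≤ p - 1 := le_of_lt (Nat.lt_of_succ_le hk1)
    have hp1 : p - 1 + 1 = p := Nat.succ_pred_eq_of_pos hp.pos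
    have hpas : (p-1).choose k + (p-1).choose (k+1) = p.choose (k+1) := by
      have := Nat.choose_succ_succ (p-1) k
      rw [Nat.succ_eq_add_one, Nat.succ_eq_add_one, hp1] at this
      exact this.symm
    have hdvd : p ∣ p.choose (k+1) := hp.dvd_choose_self (Nat.succ_ne_zero k) (by omega)
    have hcast : ((p.choose (k+1) : ZMod p)) = 0 := by
      exact_mod_cast (ZMod.natCast_eq_zero_iff _ _).mpr hdvd
    have h2 := congrArg (fun n : ℕ => (n : ZMod p)) hpas
    simp only [Nat.cast_add] at h2
    rw [hcast, ih hk'] at h2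
    have h3 : ((p-1).choose (k+1) : ZMod p) = -(-1)^k := by linear_combination h2
    rw [h3, pow_succ]; ring

theorem hZ2 : ((-1 : ZMod p))^(p-1) = 1 := by
  have hp : p.Prime := Fact.out
  rcases hp.eq_two_or_odd' with h2 | hodd
  · subst h2; rw [pow_one]; rfl
  · exact (Nat.Odd.sub_odd hodd odd_one).neg_one_pow


theorem ad_pow_prime {T : Type*} [Ring T] [Algebra (ZMod p) T]
    (u v : T) (huv : Commute u v) :
    (u - v) ^ (p - 1) = ∑ k ∈ Finset.range p, u ^ k * v ^ (p - 1 - k) := by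
  have hp : p.Prime := Fact.out
  have hp1 : p - 1 + 1 = p := Nat.succ_pred_eq_of_pos hp.pos
  rw [sub_eq_add_neg u v, (huv.neg_right).add_pow, hp1]
  apply Finset.sum_congr rfl
  intro k hk
  have hk' : k ≤ p - 1 := by have := Finset.mem_range.mp hk; omega
  have h1 : (-1 : T) = (-1 : ZMod p) • (1 : T) := by
    rw [neg_smul, one_smul]
  have h2 : ((((p-1).choose k : ℕ) : T)) = ((((p-1).choose k : ℕ) : ZMod p)) • (1 : T) := by
    rw [← map_natCast (algebraMap (ZMod p) T), Algebra.algebraMap_eq_smul_one]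
  rw [neg_pow, h1, h2, _root_.smul_pow, one_pow]
  rw [hZ1 p k hk']
  simp only [smul_mul_assoc, mul_smul_comm, one_mul, mul_one, smul_smul]
  rw [← pow_add, show k + (p - 1 - k) = p - 1 from by omega, hZ2 p, one_smul]

set_option maxHeartbeats 1000000 in
theorem key_op (b : RatFunc (ZMod p)) :
    ((DD (ZMod p) + MM b) ^ p) = MM (b ^ p) + MM (rderiv^[p-1] b) + (DD (ZMod p)) ^ p := by
  haveI : HasDistribNeg (Module.End (ZMod p) (Polynomial (Module.End (ZMod p)
      (RatFunc (ZMod p))))) :=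
    @NonUnitalNonAssocRing.toHasDistribNeg _ (inferInstance : NonUnitalNonAssocRing
      (Module.End (ZMod p) (Polynomial (Module.End (ZMod p) (RatFunc (ZMod p))))))
  have hp : p.Prime := Fact.out
  have hp2 : 2 ≤ p := hp.two_le
  have hp1 : p - 1 + 1 = p := Nat.succ_pred_eq_of_pos hp.pos
  set G : Polynomial (Module.End (ZMod p) (RatFunc (ZMod p))) :=
    monomial 1 (DD (ZMod p)) + monomial 0 (MM b) with hGdef
  set u : Module.End (ZMod p) (Polynomial (Module.End (ZMod p) (RatFunc (ZMod p)))) :=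
    LinearMap.mulLeft (ZMod p) G with hu
  set v : Module.End (ZMod p) (Polynomial (Module.End (ZMod p) (RatFunc (ZMod p)))) :=
    LinearMap.mulRight (ZMod p) G with hv
  -- commutator helper
  have hhelp : ∀ (m : Module.End (ZMod p) (RatFunc (ZMod p))) (j : ℕ),
      G * monomial j m - monomial j m * G
      = monomial (j+1) (DD (ZMod p) * m - m * DD (ZMod p))
        + monomial j (MM b * m - m * MM b) := by
    intro m j
    rw [hGdef]
    simp only [add_mul, mul_add, monomial_mul_monomial, zero_add, add_zero]
    rw [add_comm 1 j]
    rw [map_sub, map_sub]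
    abel
  -- iterated ad computation
  have hadber : ∀ j : ℕ, ((u - v) ^ (j+1)) (monomial 0 (DD (ZMod p)))
      = -(monomial j (MM (rderiv^[j+1] b))) := by
    intro j
    induction j with
    | zero =>
      rw [pow_one, LinearMap.sub_apply, hu, hv, LinearMap.mulLeft_apply,
        LinearMap.mulRight_apply, hhelp (DD (ZMod p)) 0, Function.iterate_one]
      simp only [sub_self, map_zero, zero_add]
      rw [show MM b * DD (ZMod p) - DD (ZMod p) * MM b
          = -(DD (ZMod p) * MM b - MM b * DD (ZMod p)) from (neg_sub _ _).symm,
        comm_DM, map_neg]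
    | succ j ih =>
      rw [pow_succ', Module.End.mul_apply, ih, map_neg, LinearMap.sub_apply, hu, hv,
        LinearMap.mulLeft_apply, LinearMap.mulRight_apply, hhelp]
      have h1 : MM b * MM (rderiv^[j+1] b) - MM (rderiv^[j+1] b) * MM b = 0 := by
        rw [MM_mul_MM, MM_mul_MM, mul_comm, sub_self]
      have h2 : DD (ZMod p) * MM (rderiv^[j+1] b) - MM (rderiv^[j+1] b) * DD (ZMod p)
          = MM (rderiv^[j+1+1] b) := by
        rw [comm_DM]
        exact congrArg MM (Function.iterate_succ_apply' rderiv (j+1) b).symm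
      rw [h1, h2, map_zero, add_zero]
  -- derivative of G
  have hdG : derivative G = monomial 0 (DD (ZMod p)) := by
    rw [hGdef]; simp [derivative_monomial]
  -- derivative of G^n as a sum
  have hder : ∀ n : ℕ, derivative (G ^ n)
      = ∑ k ∈ Finset.range n, G^k * monomial 0 (DD (ZMod p)) * G^(n-1-k) := by
    intro n
    induction n with
    | zero => simp
    | succ n ih =>
      rw [pow_succ, derivative_mul, ih, hdG, Finset.sum_mul]
      simp only [Nat.add_sub_cancel]
      rw [Finset.sum_range_succ]
      congr 1
      · apply Finset.sum_congr rfl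
        intro k hk
        have hk' : k < n := Finset.mem_range.mp hk
        rw [mul_assoc, ← pow_succ, show n - 1 - k + 1 = n - k from by omega, mul_assoc]
      · rw [Nat.sub_self, pow_zero, mul_one]
  -- (-1)^j applied
  have hneg : ∀ (j : ℕ) (z : Polynomial (Module.End (ZMod p) (RatFunc (ZMod p)))),
      ((-1 : Module.End (ZMod p) (Polynomial (Module.End (ZMod p) (RatFunc (ZMod p)))))^j) z
        = (-1 : ZMod p)^j • z := by
    intro j
    induction j with
    | zero => intro z; simp
    | succ j ih =>
      intro z
      rw [pow_succ, Module.End.mul_apply, pow_succ]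
      rw [LinearMap.neg_apply, Module.End.one_apply, ih]
      rw [mul_smul, neg_one_smul, smul_neg]
  -- the binomial collapse
  have hsum : derivative (G^p) = -(monomial (p-2) (MM (rderiv^[p-1] b))) := by
    have huv0 : Commute u v := LinearMap.commute_mulLeft_right G G
    have e2 : ((u - v)^(p-1)) (monomial 0 (DD (ZMod p)))
        = -(monomial (p-2) (MM (rderiv^[p-1] b))) := by
      have := hadber (p-2)
      rw [show p - 2 + 1 = p - 1 from by omega] at this
      exact this
    rw [hder p, ← e2, ad_pow_prime p u v huv0, LinearMap.sum_apply]
    apply Finset.sum_congr rfl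
    intro k hk
    rw [Module.End.mul_apply, hu, hv, LinearMap.pow_mulLeft, LinearMap.pow_mulRight,
      LinearMap.mulRight_apply, LinearMap.mulLeft_apply, mul_assoc]
  -- degree bounds
  have hdegG : G.natDegree ≤ 1 := by
    rw [hGdef]
    refine (natDegree_add_le _ _).trans (max_le (natDegree_monomial_le _)
      ((natDegree_monomial_le _).trans (by omega)))
  have hdegn : ∀ n : ℕ, (G^n).natDegree ≤ n := by
    intro n
    refine natDegree_pow_le.trans ?_
    calc n * G.natDegree ≤ n * 1 := Nat.mul_le_mul_left n hdegG
    _ = n := mul_one n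
  -- top coefficient
  have htop : ∀ n : ℕ, (G^n).coeff n = (DD (ZMod p))^n := by
    intro n
    induction n with
    | zero => simp
    | succ n ih =>
      have hsplit : G^(n+1) = G^n * monomial 1 (DD (ZMod p)) + G^n * monomial 0 (MM b) := by
        rw [pow_succ]
        calc G^n * G = G^n * (monomial 1 (DD (ZMod p)) + monomial 0 (MM b)) := by rw [← hGdef]
        _ = _ := by rw [mul_add]
      have c1 : (G^n * monomial 1 (DD (ZMod p))).coeff (n+1)
          = (G^n).coeff n * DD (ZMod p) := coeff_mul_monomial (G^n) 1 n (DD (ZMod p))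
      have c2 : (G^n * monomial 0 (MM b)).coeff (n+1)
          = (G^n).coeff (n+1) * MM b := coeff_mul_monomial_zero (G^n) (n+1) (MM b)
      have c3 : (G^n).coeff (n+1) = 0 :=
        coeff_eq_zero_of_natDegree_lt (lt_of_le_of_lt (hdegn n) (lt_add_one n))
      rw [hsplit, coeff_add, c1, c2, c3, zero_mul, add_zero, ih, pow_succ]
  -- constant coefficient
  have h0 : (G^p).coeff 0 = (MM b)^p := by
    have : (G^p).coeff 0 = constantCoeff (G^p) := rfl
    rw [this, map_pow]
    have hG0 : constantCoeff G = MM b := by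
      rw [hGdef]
      show (monomial 1 (DD (ZMod p)) + monomial 0 (MM b)).coeff 0 = MM b
      rw [coeff_add, coeff_monomial, coeff_monomial]
      simp
    rw [hG0]
  -- middle coefficients vanish
  have hmid : ∀ n : ℕ, n < p - 2 → (G^p).coeff (n+1) = 0 := by
    intro n hn
    have hc := coeff_derivative (G^p) n
    rw [hsum, coeff_neg, coeff_monomial, if_neg (by omega : ¬ (p - 2 = n)), neg_zero] at hc
    have hcast : ((n : Module.End (ZMod p) (RatFunc (ZMod p))) + 1)
        = ((n+1 : ℕ) : ZMod p) • (1 : Module.End (ZMod p) (RatFunc (ZMod p))) := by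
      rw [← Nat.cast_succ,
        ← map_natCast (algebraMap (ZMod p) (Module.End (ZMod p) (RatFunc (ZMod p)))),
        Algebra.algebraMap_eq_smul_one]
    rw [hcast, mul_smul_comm, mul_one] at hc
    have hne : ((n+1 : ℕ) : ZMod p) ≠ 0 := by
      rw [Ne, ZMod.natCast_eq_zero_iff]
      intro hdvd
      have := Nat.le_of_dvd (Nat.succ_pos n) hdvd
      omega
    have h5 : ((n+1 : ℕ) : ZMod p) • (G^p).coeff (n+1) = 0 := hc.symm
    calc (G^p).coeff (n+1)
        = (((n+1 : ℕ) : ZMod p))⁻¹ • (((n+1 : ℕ) : ZMod p) • (G^p).coeff (n+1)) := by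
          rw [smul_smul, inv_mul_cancel₀ hne, one_smul]
      _ = (((n+1 : ℕ) : ZMod p))⁻¹ • (0 : Module.End (ZMod p) (RatFunc (ZMod p))) := by rw [h5]
      _ = 0 := smul_zero _
  -- coefficient p-1
  have hlastc : (G^p).coeff (p-1) = MM (rderiv^[p-1] b) := by
    have hc := coeff_derivative (G^p) (p-2)
    rw [hsum, coeff_neg, coeff_monomial, if_pos rfl] at hc
    rw [show p - 2 + 1 = p - 1 from by omega] at hc
    have hcast : (((p - 2 : ℕ) : Module.End (ZMod p) (RatFunc (ZMod p))) + 1)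
        = (-1 : ZMod p) • (1 : Module.End (ZMod p) (RatFunc (ZMod p))) := by
      rw [← Nat.cast_succ, show (p - 2).succ = p - 1 from by omega,
        ← map_natCast (algebraMap (ZMod p) (Module.End (ZMod p) (RatFunc (ZMod p)))),
        Algebra.algebraMap_eq_smul_one]
      congr 1
      rw [Nat.cast_sub hp.one_le, ZMod.natCast_self, Nat.cast_one, zero_sub]
    rw [hcast, mul_smul_comm, mul_one, neg_one_smul] at hc
    exact (neg_injective hc).symm
  -- evaluation at 1
  have heval : (DD (ZMod p) + MM b)^p = ∑ i ∈ Finset.range (p+1), (G^p).coeff i := by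
    set φ := Polynomial.eval₂RingHom' (RingHom.id (Module.End (ZMod p) (RatFunc (ZMod p))))
      (1 : Module.End (ZMod p) (RatFunc (ZMod p))) (fun a => Commute.one_right a) with hφ
    have hφG : φ G = DD (ZMod p) + MM b := by
      show Polynomial.eval₂ (RingHom.id _) 1 G = _
      rw [hGdef, eval₂_add, eval₂_monomial, eval₂_monomial]
      simp
    have h1 : (DD (ZMod p) + MM b)^p = φ (G^p) := by rw [map_pow, hφG]
    have h2 : φ (G^p) = ∑ i ∈ Finset.range (p+1), (G^p).coeff i := by
      show Polynomial.eval₂ (RingHom.id _) 1 (G^p) = _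
      rw [Polynomial.eval₂_eq_sum_range' (RingHom.id _)
        (lt_of_le_of_lt (hdegn p) (lt_add_one p)) 1]
      simp
    rw [h1, h2]
  -- collapse the sum
  have hsubset : ({0, p-1, p} : Finset ℕ) ⊆ Finset.range (p+1) := by
    intro i hi
    simp only [Finset.mem_insert, Finset.mem_singleton] at hi
    rw [Finset.mem_range]
    rcases hi with h | h | h <;> omega
  have hvanish : ∀ i ∈ Finset.range (p+1), i ∉ ({0, p-1, p} : Finset ℕ) → (G^p).coeff i = 0 := by
    intro i hi hni
    rw [Finset.mem_range] at hi
    simp only [Finset.mem_insert, Finset.mem_singleton] at hni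
    push_neg at hni
    obtain ⟨h1, h2, h3⟩ := hni
    have : i - 1 < p - 2 := by omega
    have := hmid (i-1) this
    rwa [show i - 1 + 1 = i from by omega] at this
  have hsplit3 : ∑ i ∈ Finset.range (p+1), (G^p).coeff i
      = (G^p).coeff 0 + ((G^p).coeff (p-1) + (G^p).coeff p) := by
    rw [← Finset.sum_subset hsubset hvanish]
    have d1 : (0 : ℕ) ∉ ({p-1, p} : Finset ℕ) := by
      simp only [Finset.mem_insert, Finset.mem_singleton]
      push_neg
      omega
    have d2 : (p-1 : ℕ) ∉ ({p} : Finset ℕ) := by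
      simp only [Finset.mem_singleton]
      omega
    rw [show ({0, p-1, p} : Finset ℕ) = insert 0 ({p-1, p} : Finset ℕ) from rfl,
      Finset.sum_insert d1,
      show ({p-1, p} : Finset ℕ) = insert (p-1) ({p} : Finset ℕ) from rfl,
      Finset.sum_insert d2, Finset.sum_singleton]
  rw [heval, hsplit3, h0, hlastc, htop p, MM_pow]
  abel
end

/-- **Jacobson's formula in rank one**: for a prime `p` and `b(x) ∈ 𝔽_p(x)`, the
`p`-curvature of `∂ + b(x)` (the constant term `b_p` of `(∂ + b)^p`, obtained after
`p − 1` steps of the recurrence `b ↦ b' + b·b` starting from `b`) is given by the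
closed formula `b_p(x) = b^{(p−1)}(x) + b(x)^p`. -/
theorem jacobson_formula (p : ℕ) [Fact p.Prime] (b : RatFunc (ZMod p)) :
    bseq b (p - 1) = rderiv^[p - 1] b + b ^ p := by
  have hp : p.Prime := Fact.out
  have hp1 : p - 1 + 1 = p := Nat.succ_pred_eq_of_pos hp.pos
  have hA : ∀ k : ℕ, ((DD (ZMod p) + MM b)^(k+1)) (1 : RatFunc (ZMod p)) = bseq b k := by
    intro k
    induction k with
    | zero =>
      rw [pow_one, LinearMap.add_apply, DD_apply, MM_apply, rderiv_one, mul_one, zero_add]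
      rfl
    | succ k ih =>
      rw [pow_succ', Module.End.mul_apply, ih, LinearMap.add_apply, DD_apply, MM_apply]
      rfl
  have hL : ((DD (ZMod p) + MM b)^p) (1 : RatFunc (ZMod p)) = bseq b (p-1) := by
    have := hA (p-1)
    rwa [hp1] at this
  have hDp : ((DD (ZMod p))^p) (1 : RatFunc (ZMod p)) = 0 := by
    have h : ∀ n : ℕ, ((DD (ZMod p))^(n+1)) (1 : RatFunc (ZMod p)) = 0 := by
      intro n
      rw [pow_succ, Module.End.mul_apply, DD_apply, rderiv_one, map_zero]
    have := h (p-1)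
    rwa [hp1] at this
  calc bseq b (p-1) = ((DD (ZMod p) + MM b)^p) 1 := hL.symm
    _ = (MM (b^p) + MM (rderiv^[p-1] b) + (DD (ZMod p))^p) 1 := by rw [key_op p b]
    _ = b^p * 1 + rderiv^[p-1] b * 1 + ((DD (ZMod p))^p) 1 := by
        rw [LinearMap.add_apply, LinearMap.add_apply, MM_apply, MM_apply]
    _ = rderiv^[p-1] b + b^p := by rw [hDp, mul_one, mul_one, add_zero, add_comm]
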